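/- If along a geodesic path α_{i-1}, α_i, α_{i+1} in the Cayley graph of a right-angled Coxeter group the word lengths satisfy ℓ(α_{i-1}) < ℓ(α_i) > ℓ(α_{i+1}), then there exist commuting generators s, t and an element α_i' with ℓ(α_i') = ℓ(α_i) - 2 such that α_{i-1} = α_i' s, α_{i+1} = α_i' t, and α_{i-1}, α_i', α_{i+1} is again a geodesic path. -/

import Mathlib

namespace RACGAux

open CoxeterSystem List

attribute [local instance] Classical.propDecidable

/-- count occurrences of `t` in a list, with classical decidability -/
noncomputable def icount {W : Type*} (t : W) : List W → ℕ
  | [] => 0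
  | x :: l => (if x = t then 1 else 0) + icount t l

@[simp] lemma icount_nil {W : Type*} (t : W) : icount t ([] : List W) = 0 := rfl

lemma icount_cons {W : Type*} (t x : W) (l : List W) :
    icount t (x :: l) = (if x = t then 1 else 0) + icount t l := rfl

lemma icount_eq_zero_of_not_mem {W : Type*} {t : W} {l : List W} (h : t ∉ l) :
    icount t l = 0 := by
  induction l with
  | nil => rfl
  | cons x l ih =>
    rw [icount_cons, ih (fun hm => h (List.mem_cons_of_mem _ hm)), if_neg, add_zero]
    intro hx; exact h (by rw [← hx]; exact List.mem_cons_self)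

lemma mem_of_icount_ne_zero {W : Type*} {t : W} {l : List W} (h : icount t l ≠ 0) :
    t ∈ l := by
  by_contra hm
  exact h (icount_eq_zero_of_not_mem hm)

lemma icount_eq_one_of_nodup_mem {W : Type*} {t : W} {l : List W} (hn : l.Nodup)
    (hm : t ∈ l) : icount t l = 1 := by
  induction l with
  | nil => simp at hm
  | cons x l ih =>
    rw [List.nodup_cons] at hn
    rcases List.mem_cons.mp hm with rfl | hm'
    · rw [icount_cons, if_pos rfl, icount_eq_zero_of_not_mem hn.1]
    · rw [icount_cons, ih hn.2 hm', if_neg, zero_add]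
      intro hx; rw [hx] at hn; exact hn.1 hm'

variable {B : Type*} {W : Type*} [Group W] {M : CoxeterMatrix B} (cs : CoxeterSystem M W)

lemma rightInvSeq_cons (i : B) (ω : List B) :
    cs.rightInvSeq (i :: ω) =
      ((cs.wordProd ω)⁻¹ * cs.simple i * cs.wordProd ω) :: cs.rightInvSeq ω := rfl

lemma conj_invol_eq_iff {g w u : W} (hg : g * g = 1) :
    g * w * g = u ↔ w = g * u * g := by
  have key : ∀ v : W, g * (g * v * g) * g = v := by
    intro v
    have h : g * (g * v * g) * g = (g * g) * v * (g * g) := by group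
    rw [h, hg, one_mul, mul_one]
  constructor
  · rintro rfl; exact (key w).symm
  · rintro rfl; exact key u

/-- the sign-representation function of a generator -/
noncomputable def sgnFun (i : B) : W × ℤˣ → W × ℤˣ :=
  fun p => (cs.simple i * p.1 * cs.simple i, if p.1 = cs.simple i then -p.2 else p.2)

lemma sgnFun_involutive (i : B) : Function.Involutive (sgnFun cs i) := by
  rintro ⟨w, ε⟩
  simp only [sgnFun]
  have h1 : cs.simple i * (cs.simple i * w * cs.simple i) * cs.simple i = w := by
    have h : cs.simple i * (cs.simple i * w * cs.simple i) * cs.simple i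
        = (cs.simple i * cs.simple i) * w * (cs.simple i * cs.simple i) := by group
    rw [h, cs.simple_mul_simple_self, one_mul, mul_one]
  have h2 : (cs.simple i * w * cs.simple i = cs.simple i) ↔ w = cs.simple i := by
    rw [conj_invol_eq_iff (cs.simple_mul_simple_self i),
      cs.simple_mul_simple_self, one_mul]
  ext
  · exact h1
  · simp only
    by_cases hw : w = cs.simple i
    · rw [if_pos hw, if_pos (h2.mpr hw), neg_neg]
    · rw [if_neg hw, if_neg (fun hc => hw (h2.mp hc))]

/-- the sign representation permutation -/
noncomputable def sgnPerm (i : B) : Equiv.Perm (W × ℤˣ) :=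
  (sgnFun_involutive cs i).toPerm

lemma sgnPerm_apply (i : B) (p : W × ℤˣ) :
    sgnPerm cs i p = (cs.simple i * p.1 * cs.simple i,
      if p.1 = cs.simple i then -p.2 else p.2) := rfl

lemma sgn_liftable (hra : ∀ s t : B, s ≠ t → M s t = 0 ∨ M s t = 2) :
    M.IsLiftable (fun i => sgnPerm cs i) := by
  intro i j
  rcases eq_or_ne i j with rfl | hij
  · rw [M.diagonal, pow_one]
    ext p : 1
    rw [Equiv.Perm.mul_apply]
    exact (sgnFun_involutive cs i) p
  · rcases hra i j hij with h0 | h2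
    · rw [h0, pow_zero]
    · rw [h2]
      have hx : (cs.simple i * cs.simple j) * (cs.simple i * cs.simple j) = 1 := by
        have h := cs.simple_mul_simple_pow i j
        rwa [h2, pow_two] at h
      have hcomm : cs.simple i * cs.simple j = cs.simple j * cs.simple i := by
        have h := mul_eq_one_iff_eq_inv.mp hx
        rwa [mul_inv_rev, cs.inv_simple, cs.inv_simple] at h
      have hx' : (cs.simple j * cs.simple i) * (cs.simple j * cs.simple i) = 1 := by
        rw [← hcomm]; exact hx
      have hsij : cs.simple i * cs.simple j * cs.simple i = cs.simple j := by
        rw [hcomm, cs.simple_mul_simple_cancel_right]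
      have hsji : cs.simple j * cs.simple i * cs.simple j = cs.simple i := by
        rw [← hcomm, cs.simple_mul_simple_cancel_right]
      ext p : 1
      rcases p with ⟨w, ε⟩
      rw [pow_two, Equiv.Perm.mul_apply, Equiv.Perm.mul_apply, Equiv.Perm.mul_apply,
        Equiv.Perm.one_apply]
      rw [sgnPerm_apply, sgnPerm_apply, sgnPerm_apply, sgnPerm_apply]
      simp only
      have hc3 : (cs.simple i * (cs.simple j * w * cs.simple j) * cs.simple i = cs.simple j)
          ↔ (w = cs.simple j) := by
        rw [conj_invol_eq_iff (cs.simple_mul_simple_self i), hsij,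
          conj_invol_eq_iff (cs.simple_mul_simple_self j),
          cs.simple_mul_simple_self, one_mul]
      have hc4 : (cs.simple j * (cs.simple i * (cs.simple j * w * cs.simple j) * cs.simple i)
            * cs.simple j = cs.simple i) ↔ (cs.simple j * w * cs.simple j = cs.simple i) := by
        rw [conj_invol_eq_iff (cs.simple_mul_simple_self j), hsji,
          conj_invol_eq_iff (cs.simple_mul_simple_self i),
          cs.simple_mul_simple_self, one_mul]
      have hfst : cs.simple i * (cs.simple j * (cs.simple i * (cs.simple j * w * cs.simple j)
            * cs.simple i) * cs.simple j) * cs.simple i = w := by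
        have h : cs.simple i * (cs.simple j * (cs.simple i * (cs.simple j * w * cs.simple j)
              * cs.simple i) * cs.simple j) * cs.simple i
            = (cs.simple i * cs.simple j * (cs.simple i * cs.simple j)) * w
              * (cs.simple j * cs.simple i * (cs.simple j * cs.simple i)) := by group
        rw [h, hx, hx', one_mul, mul_one]
      refine Prod.ext ?_ ?_
      · exact hfst
      · show (if _ then _ else _) = ε
        simp only [hc3, hc4]
        by_cases h1 : w = cs.simple j <;>
          by_cases hh2 : cs.simple j * w * cs.simple j = cs.simple i
        · simp only [if_pos h1, if_pos hh2, neg_neg]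
        · simp only [if_pos h1, if_neg hh2, neg_neg]
        · simp only [if_neg h1, if_pos hh2, neg_neg]
        · simp only [if_neg h1, if_neg hh2]

/-- the sign representation of the right-angled Coxeter group -/
noncomputable def sgnHom (hra : ∀ s t : B, s ≠ t → M s t = 0 ∨ M s t = 2) :
    W →* Equiv.Perm (W × ℤˣ) :=
  cs.lift ⟨fun i => sgnPerm cs i, sgn_liftable cs hra⟩

lemma sgnHom_simple (hra : ∀ s t : B, s ≠ t → M s t = 0 ∨ M s t = 2) (i : B) :
    sgnHom cs hra (cs.simple i) = sgnPerm cs i :=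
  cs.lift_apply_simple (sgn_liftable cs hra) i

lemma sgnHom_wordProd (hra : ∀ s t : B, s ≠ t → M s t = 0 ∨ M s t = 2)
    (ω : List B) (w : W) (ε : ℤˣ) :
    sgnHom cs hra (cs.wordProd ω) (w, ε) =
      (cs.wordProd ω * w * (cs.wordProd ω)⁻¹,
        if Odd (icount w (cs.rightInvSeq ω)) then -ε else ε) := by
  induction ω generalizing w ε with
  | nil => simp [Nat.odd_iff]
  | cons c ω ih =>
    rw [cs.wordProd_cons, map_mul, Equiv.Perm.mul_apply, ih, sgnHom_simple, sgnPerm_apply]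
    simp only
    rw [rightInvSeq_cons, icount_cons]
    ext
    · simp only
      rw [mul_inv_rev, cs.inv_simple]
      group
    · simp only
      by_cases hc : (cs.wordProd ω)⁻¹ * cs.simple c * cs.wordProd ω = w
      · have hc' : cs.wordProd ω * w * (cs.wordProd ω)⁻¹ = cs.simple c := by
          rw [← hc]; group
        rw [if_pos hc, if_pos hc']
        have hodd : Odd (1 + icount w (cs.rightInvSeq ω))
            ↔ ¬ Odd (icount w (cs.rightInvSeq ω)) := by
          rw [Nat.add_comm, Nat.odd_add_one]
        by_cases hn : Odd (icount w (cs.rightInvSeq ω))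
        · rw [if_pos hn, if_neg (by rw [hodd]; exact not_not_intro hn), neg_neg]
        · rw [if_neg hn, if_pos (hodd.mpr hn)]
      · have hc' : ¬ (cs.wordProd ω * w * (cs.wordProd ω)⁻¹ = cs.simple c) := by
          intro h
          apply hc
          rw [← h]; group
        rw [if_neg hc, if_neg hc', zero_add]

lemma icount_parity (hra : ∀ s t : B, s ≠ t → M s t = 0 ∨ M s t = 2)
    {ω τ : List B} (h : cs.wordProd ω = cs.wordProd τ) (w : W) :
    (Odd (icount w (cs.rightInvSeq ω)) ↔ Odd (icount w (cs.rightInvSeq τ))) := by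
  have h1 := sgnHom_wordProd cs hra ω w 1
  have h2 := sgnHom_wordProd cs hra τ w 1
  rw [h, h2] at h1
  have h3 := congrArg Prod.snd h1
  simp only at h3
  by_cases ho : Odd (icount w (cs.rightInvSeq τ)) <;>
    by_cases ho' : Odd (icount w (cs.rightInvSeq ω)) <;>
      simp [ho, ho'] at h3 ⊢

/-- The exchange property. -/
theorem exchange (hra : ∀ s t : B, s ≠ t → M s t = 0 ∨ M s t = 2)
    {ω : List B} {i : B}
    (hdesc : cs.length (cs.wordProd ω * cs.simple i) < cs.length (cs.wordProd ω)) :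
    ∃ k, k < ω.length ∧ (cs.rightInvSeq ω).getD k 1 = cs.simple i := by
  obtain ⟨σ, hσlen, hσ⟩ := cs.exists_reduced_word (cs.wordProd ω * cs.simple i)
  have hlen : cs.length (cs.wordProd ω * cs.simple i) + 1 = cs.length (cs.wordProd ω) := by
    rcases cs.length_mul_simple (cs.wordProd ω) i with h | h
    · omega
    · exact h
  have hτ : cs.wordProd (σ.concat i) = cs.wordProd ω := by
    rw [cs.wordProd_concat, ← hσ, cs.simple_mul_simple_cancel_right]
  have hτred : cs.IsReduced (σ.concat i) := by
    show cs.length _ = _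
    rw [hτ, List.length_concat, ← hσlen, ← hσ, hlen]
  have hmem : cs.simple i ∈ cs.rightInvSeq (σ.concat i) := by
    rw [cs.rightInvSeq_concat]
    simp
  have hodd : Odd (icount (cs.simple i) (cs.rightInvSeq (σ.concat i))) := by
    rw [icount_eq_one_of_nodup_mem hτred.nodup_rightInvSeq hmem]
    exact odd_one
  have hoddω : Odd (icount (cs.simple i) (cs.rightInvSeq ω)) :=
    (icount_parity cs hra hτ _).mp hodd
  have hmemω : cs.simple i ∈ cs.rightInvSeq ω :=
    mem_of_icount_ne_zero (by intro h0; rw [h0] at hoddω; simp [Nat.odd_iff] at hoddω)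
  obtain ⟨k, hk, hget⟩ := List.mem_iff_getElem.mp hmemω
  refine ⟨k, by simpa using hk, ?_⟩
  rw [List.getD_eq_getElem _ 1 hk, hget]

/-- reflection of `ℤ` about 0 -/
def ra : Equiv.Perm ℤ := Function.Involutive.toPerm (fun z => -z) (fun z => neg_neg z)

/-- reflection of `ℤ` about 1/2 -/
def rb : Equiv.Perm ℤ := Function.Involutive.toPerm (fun z => 1 - z)
  (fun z => by simp only []; omega)

lemma ra_apply (z : ℤ) : ra z = -z := rfl
lemma rb_apply (z : ℤ) : rb z = 1 - z := rfl

/-- the map of generators to the infinite dihedral group -/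
noncomputable def dihMap (a b : B) : B → Equiv.Perm ℤ :=
  fun k => if k = a then ra else if k = b then rb else 1

lemma dihMap_self_mul (a b k : B) : dihMap a b k * dihMap a b k = 1 := by
  unfold dihMap
  split_ifs
  · ext z
    simp [Equiv.Perm.mul_apply, ra_apply]
  · ext z
    simp only [Equiv.Perm.mul_apply, rb_apply, Equiv.Perm.one_apply]
    omega
  · simp

lemma dih_liftable (hra : ∀ s t : B, s ≠ t → M s t = 0 ∨ M s t = 2)
    {a b : B} (hab : a ≠ b) (h0 : M a b = 0) :
    M.IsLiftable (dihMap a b) := by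
  intro k l
  rcases eq_or_ne k l with rfl | hkl
  · rw [M.diagonal, pow_one, dihMap_self_mul]
  · rcases hra k l hkl with h | h
    · rw [h, pow_zero]
    · rw [h]
      have hne1 : ¬(k = a ∧ l = b) := by
        rintro ⟨rfl, rfl⟩
        rw [h0] at h
        omega
      have hne2 : ¬(k = b ∧ l = a) := by
        rintro ⟨rfl, rfl⟩
        rw [M.symmetric, h0] at h
        omega
      have hone : dihMap a b k = 1 ∨ dihMap a b l = 1 := by
        unfold dihMap
        by_cases hka : k = a <;> by_cases hkb : k = b <;>
          by_cases hla : l = a <;> by_cases hlb : l = b <;>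
          simp_all
      rcases hone with h1 | h1
      · rw [h1, one_mul, pow_two, dihMap_self_mul]
      · rw [h1, mul_one, pow_two, dihMap_self_mul]

lemma dih_pow_eq_one (hra : ∀ s t : B, s ≠ t → M s t = 0 ∨ M s t = 2)
    {a b : B} (hab : a ≠ b) (h0 : M a b = 0) {N : ℕ}
    (hN : (cs.simple b * cs.simple a) ^ N = 1) : N = 0 := by
  set ψ := cs.lift ⟨dihMap a b, dih_liftable (M := M) hra hab h0⟩ with hψ
  have hψa : ψ (cs.simple a) = ra := by
    rw [hψ, cs.lift_apply_simple]
    unfold dihMap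
    rw [if_pos rfl]
  have hψb : ψ (cs.simple b) = rb := by
    rw [hψ, cs.lift_apply_simple]
    unfold dihMap
    rw [if_neg (Ne.symm hab), if_pos rfl]
  have happ := congrArg ψ hN
  rw [map_pow, map_mul, map_one, hψa, hψb] at happ
  have hpow : ∀ (N : ℕ) (z : ℤ), ((rb * ra) ^ N) z = z + N := by
    intro N
    induction N with
    | zero => intro z; simp
    | succ n ih =>
      intro z
      rw [pow_succ, Equiv.Perm.mul_apply, ih]
      have : (rb * ra) z = z + 1 := by
        rw [Equiv.Perm.mul_apply, ra_apply, rb_apply]; omega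
      rw [this]
      push_cast
      ring
  have h0' := congrArg (fun (g : Equiv.Perm ℤ) => g 0) happ
  simp only [hpow, Equiv.Perm.one_apply, zero_add] at h0'
  exact_mod_cast h0'

lemma alt_rel_absurd (hra : ∀ s t : B, s ≠ t → M s t = 0 ∨ M s t = 2)
    {a b : B} (hab : a ≠ b) (h0 : M a b = 0) (r : ℕ)
    (hE : cs.wordProd (alternatingWord b a (r+1)) = cs.wordProd (alternatingWord a b (r+1))) :
    False := by
  have hpow1 := cs.prod_alternatingWord_eq_mul_pow b a (r+1)
  have hpow2 := cs.prod_alternatingWord_eq_mul_pow a b (r+1)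
  set p := (r+1)/2 with hp
  have hY : (cs.simple a * cs.simple b : W) ^ p = ((cs.simple b * cs.simple a) ^ p)⁻¹ := by
    rw [← inv_pow]
    congr 1
    rw [mul_inv_rev, cs.inv_simple, cs.inv_simple]
  by_cases he : Even (r+1)
  · rw [hpow1, hpow2, if_pos he, if_pos he, one_mul, one_mul, hY] at hE
    have h1 : (cs.simple b * cs.simple a) ^ (2*p) = 1 := by
      rw [two_mul, pow_add]
      nth_rewrite 1 [hE]
      exact inv_mul_cancel _
    have := dih_pow_eq_one cs hra hab h0 h1
    have hp1 : p ≠ 0 := by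
      rcases he with ⟨t, ht⟩
      omega
    omega
  · rw [hpow1, hpow2, if_neg he, if_neg he, hY] at hE
    have h1 : (cs.simple b * cs.simple a) ^ (2*p+1) = 1 := by
      calc (cs.simple b * cs.simple a) ^ (2*p+1)
          = (cs.simple b * cs.simple a)^p * cs.simple b
            * (cs.simple a * (cs.simple b * cs.simple a)^p) := by
            rw [show 2*p+1 = p + 1 + p from by omega, pow_add, pow_add, pow_one]
            group
        _ = (cs.simple b * cs.simple a)^p * cs.simple b
            * (cs.simple b * ((cs.simple b * cs.simple a)^p)⁻¹) := by rw [hE]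
        _ = (cs.simple b * cs.simple a)^p * (cs.simple b * cs.simple b)
            * ((cs.simple b * cs.simple a)^p)⁻¹ := by group
        _ = 1 := by rw [cs.simple_mul_simple_self, mul_one, mul_inv_cancel]
    have := dih_pow_eq_one cs hra hab h0 h1
    omega

lemma drop_alternatingWord (a b : B) (q m : ℕ) (h : q ≤ m) :
    (alternatingWord a b m).drop q = alternatingWord a b (m - q) := by
  induction q generalizing m with
  | zero => simp
  | succ q ih =>
    obtain ⟨m', rfl⟩ : ∃ m', m = m' + 1 := ⟨m - 1, by omega⟩
    rw [alternatingWord_succ', List.drop_succ_cons, ih m' (by omega)]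
    congr 1
    omega

lemma get?_alternatingWord (a b : B) (q m : ℕ) (h : q < m) :
    (alternatingWord a b m)[q]? = some (if Even (m - q - 1) then b else a) := by
  have h1 : (alternatingWord a b m)[q]? = ((alternatingWord a b m).drop q)[0]? := by
    rw [List.getElem?_drop, Nat.add_zero]
  rw [h1, drop_alternatingWord a b q m (le_of_lt h)]
  obtain ⟨r, hr⟩ : ∃ r, m - q = r + 1 := ⟨m - q - 1, by omega⟩
  rw [hr, alternatingWord_succ', Nat.add_sub_cancel]
  rfl

/-- No two distinct descents with an infinite bond. -/
lemma no_infinite_bond (hra : ∀ s t : B, s ≠ t → M s t = 0 ∨ M s t = 2)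
    {w : W} {i j : B} (hij : i ≠ j)
    (hdi : cs.length (w * cs.simple i) < cs.length w)
    (hdj : cs.length (w * cs.simple j) < cs.length w) :
    M i j ≠ 0 := by
  intro h0
  have key : ∀ m, ∃ a b : B, ∃ x : List B,
      ((a = i ∧ b = j) ∨ (a = j ∧ b = i)) ∧
      w = cs.wordProd (x ++ alternatingWord a b m) ∧
      x.length + m = cs.length w := by
    intro m
    induction m with
    | zero =>
      obtain ⟨x, hxlen, hx⟩ := cs.exists_reduced_word w
      exact ⟨i, j, x, Or.inl ⟨rfl, rfl⟩, by simpa [alternatingWord] using hx,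
        by simp only [Nat.add_zero]; rw [hx, hxlen]⟩
    | succ m ih =>
      obtain ⟨a, b, x, hab, hw, hlen⟩ := ih
      have hda : cs.length (w * cs.simple a) < cs.length w := by
        rcases hab with ⟨rfl, rfl⟩ | ⟨rfl, rfl⟩
        · exact hdi
        · exact hdj
      have habne : a ≠ b := by
        rcases hab with ⟨rfl, rfl⟩ | ⟨rfl, rfl⟩
        · exact hij
        · exact hij.symm
      have h0' : M a b = 0 := by
        rcases hab with ⟨rfl, rfl⟩ | ⟨rfl, rfl⟩
        · exact h0
        · rw [M.symmetric]; exact h0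
      set ω := x ++ alternatingWord a b m with hω
      have hωlen : ω.length = x.length + m := by
        rw [hω, List.length_append, length_alternatingWord]
      obtain ⟨k, hk, hget⟩ := exchange cs hra (ω := ω) (i := a) (by rw [← hw]; exact hda)
      rcases lt_or_ge k x.length with hkx | hkt
      · -- the exchanged letter is in `x`; extend the alternating tail
        have herase := cs.wordProd_mul_getD_rightInvSeq ω k
        rw [hget] at herase
        rw [hω, List.eraseIdx_append_of_lt_length hkx] at herase
        refine ⟨b, a, x.eraseIdx k, (by tauto), ?_, ?_⟩
        · have hw2 : w = cs.wordProd (x.eraseIdx k ++ alternatingWord a b m) * cs.simple a := by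
            rw [← herase, ← hω, ← hw, cs.simple_mul_simple_cancel_right]
          rw [hw2, alternatingWord_succ]
          rw [cs.wordProd_append, cs.wordProd_append, cs.wordProd_concat, mul_assoc]
        · rw [List.length_eraseIdx_of_lt hkx]
          omega
      · -- the exchanged letter is inside the alternating tail: contradiction
        exfalso
        set q := k - x.length with hq
        have hqm : q < m := by
          rw [hωlen] at hk
          omega
        have hform := cs.getD_rightInvSeq ω k
        rw [hget] at hform
        have hdrop : ω.drop (k + 1) = alternatingWord a b (m - q - 1) := by
          rw [hω, show k + 1 = x.length + (q + 1) from by omega, List.drop_length_add_append,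
            drop_alternatingWord a b (q+1) m (by omega)]
          congr 1
        have hgetq : ω[k]? = some (if Even (m - q - 1) then b else a) := by
          rw [hω, show k = x.length + q from by omega]
          rw [List.getElem?_append_right (by omega),
            show x.length + q - x.length = q from by omega,
            get?_alternatingWord a b q m hqm]
        rw [hdrop, hgetq] at hform
        set r := m - q - 1 with hr
        -- hform : cs.simple a = (π (alt a b r))⁻¹ * s c * π (alt a b r)
        have hccons : cs.simple (if Even r then b else a) * cs.wordProd (alternatingWord a b r)
            = cs.wordProd (alternatingWord a b (r+1)) := by
          rw [alternatingWord_succ', cs.wordProd_cons]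
        have hconcat : cs.wordProd (alternatingWord a b r) * cs.simple a
            = cs.wordProd (alternatingWord b a (r+1)) := by
          rw [alternatingWord_succ, cs.wordProd_concat]
        have hE : cs.wordProd (alternatingWord b a (r+1))
            = cs.wordProd (alternatingWord a b (r+1)) := by
          rw [← hconcat, ← hccons]
          rw [hform]
          simp only [Option.map_some, Option.getD_some]
          group
        exact alt_rel_absurd cs hra habne h0' r hE
  obtain ⟨a, b, x, hab, hw, hlen⟩ := key (cs.length w + 1)
  omega

end RACGAux

open CoxeterSystem in
/-- If along a geodesic path `α₀, α₁, α₂` in the Cayley graph of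
a right-angled Coxeter group the word lengths satisfy `ℓ α₀ < ℓ α₁ > ℓ α₂`, then
there are commuting generators `s, t` and an element `α'` with
`ℓ α' = ℓ α₁ - 2`, `α₀ = α' * s`, `α₂ = α' * t`, and `α₀, α', α₂` is again a
geodesic path. Here `d γ β = ℓ (γ⁻¹ * β)` is the word metric. -/
theorem racg_remove_local_maximum
    {B : Type*} {W : Type*} [Group W] {M : CoxeterMatrix B}
    (cs : CoxeterSystem M W)
    (hra : ∀ s t : B, s ≠ t → M s t = 0 ∨ M s t = 2)
    (α₀ α₁ α₂ : W)
    (h01 : cs.length (α₀⁻¹ * α₁) = 1) (h12 : cs.length (α₁⁻¹ * α₂) = 1)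
    (h02 : cs.length (α₀⁻¹ * α₂) = 2)
    (hup : cs.length α₀ < cs.length α₁) (hdown : cs.length α₂ < cs.length α₁) :
    ∃ (s t : B) (α' : W),
      M s t = 2 ∧
      cs.simple s * cs.simple t = cs.simple t * cs.simple s ∧
      cs.length α' = cs.length α₁ - 2 ∧
      α₀ = α' * cs.simple s ∧ α₂ = α' * cs.simple t ∧
      cs.length (α₀⁻¹ * α') = 1 ∧ cs.length (α'⁻¹ * α₂) = 1 := by
  classical
  obtain ⟨i, hi⟩ := cs.length_eq_one_iff.mp h01
  obtain ⟨j, hj⟩ := cs.length_eq_one_iff.mp h12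
  have hα1 : α₁ = α₀ * cs.simple i := by rw [← hi]; group
  have hα0 : α₀ = α₁ * cs.simple i := by rw [hα1, cs.simple_mul_simple_cancel_right]
  have hα2 : α₂ = α₁ * cs.simple j := by rw [← hj]; group
  have hij : i ≠ j := by
    rintro rfl
    have h : α₀ = α₂ := by rw [hα0, hα2]
    rw [← h] at h02
    simp at h02
  have hdi : cs.length (α₁ * cs.simple i) < cs.length α₁ := by rw [← hα0]; exact hup
  have hdj : cs.length (α₁ * cs.simple j) < cs.length α₁ := by rw [← hα2]; exact hdown
  have hM2 : M i j = 2 := by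
    rcases hra i j hij with h | h
    · exact absurd h (RACGAux.no_infinite_bond cs hra hij hdi hdj)
    · exact h
  have hx : (cs.simple i * cs.simple j) * (cs.simple i * cs.simple j) = 1 := by
    have h := cs.simple_mul_simple_pow i j
    rwa [hM2, pow_two] at h
  have hcomm : cs.simple i * cs.simple j = cs.simple j * cs.simple i := by
    have h := mul_eq_one_iff_eq_inv.mp hx
    rwa [mul_inv_rev, cs.inv_simple, cs.inv_simple] at h
  have hsij : cs.simple i * cs.simple j * cs.simple i = cs.simple j := by
    rw [hcomm, cs.simple_mul_simple_cancel_right]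
  have hlen2 : cs.length α₂ + 1 = cs.length α₁ := by
    rcases cs.length_mul_simple α₁ j with h | h <;> rw [← hα2] at h <;> omega
  have hlen0 : cs.length α₀ + 1 = cs.length α₁ := by
    rcases cs.length_mul_simple α₁ i with h | h <;> rw [← hα0] at h <;> omega
  obtain ⟨σ, hσlen, hσ⟩ := cs.exists_reduced_word α₂
  have hπω : cs.wordProd (σ ++ [j]) = α₁ := by
    rw [cs.wordProd_append, cs.wordProd_singleton, ← hσ, hα2,
      cs.simple_mul_simple_cancel_right]
  obtain ⟨k, hk, hget⟩ := RACGAux.exchange cs hra (ω := σ ++ [j]) (i := i)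
    (by rw [hπω]; exact hdi)
  have herase := cs.wordProd_mul_getD_rightInvSeq (σ ++ [j]) k
  rw [hget, hπω] at herase
  have hklen : k < σ.length := by
    by_contra hk'
    push_neg at hk'
    have hkeq : k = σ.length := by
      simp only [List.length_append, List.length_singleton] at hk
      omega
    have he : (σ ++ [j]).eraseIdx σ.length = σ := by
      rw [List.eraseIdx_append_of_length_le (le_refl _)]
      simp
    rw [hkeq, he, ← hσ, ← hα0] at herase
    rw [← herase] at h02
    simp at h02
  rw [List.eraseIdx_append_of_lt_length hklen] at herase
  set α' := cs.wordProd (σ.eraseIdx k) with hα'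
  have herase2 : α₁ * cs.simple i = α' * cs.simple j := by
    rw [herase, cs.wordProd_append, cs.wordProd_singleton]
  have hα0' : α₀ = α' * cs.simple j := by rw [hα0, herase2]
  have hα2' : α₂ = α' * cs.simple i := by
    have h1 : α₁ * cs.simple i * cs.simple j = α' := by
      rw [herase2, cs.simple_mul_simple_cancel_right]
    rw [← h1, hα2]
    calc α₁ * cs.simple j = α₁ * (cs.simple i * cs.simple j * cs.simple i) := by rw [hsij]
      _ = α₁ * cs.simple i * cs.simple j * cs.simple i := by group
  have hlen' : cs.length α' = cs.length α₁ - 2 := by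
    have hub : cs.length α' ≤ σ.length - 1 := by
      refine le_trans (cs.length_wordProd_le _) ?_
      rw [List.length_eraseIdx_of_lt hklen]
    have hlb : cs.length α₀ ≤ cs.length α' + 1 := by
      rw [hα0']
      rcases cs.length_mul_simple α' j with h | h <;> omega
    have hσlen' : cs.length α₂ = σ.length := by rw [hσ]; exact hσlen
    omega
  refine ⟨j, i, α', ?_, hcomm.symm, hlen', hα0', hα2', ?_, ?_⟩
  · rw [M.symmetric]; exact hM2
  · have h : α₀⁻¹ * α' = cs.simple j := by
      rw [hα0', mul_inv_rev, mul_assoc, inv_mul_cancel, mul_one, cs.inv_simple]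
    rw [h, cs.length_simple]
  · have h : α'⁻¹ * α₂ = cs.simple i := by
      rw [hα2', ← mul_assoc, inv_mul_cancel, one_mul]
    rw [h, cs.length_simple]
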